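/- For possibly infinite firing sequences σ, ρ of a net: σ ≡₀^∞ ρ (i.e., for every n there exist firing sequences σ', ρ' with σ ≡₀* σ' agreeing with ρ on a prefix of length n, and ρ ≡₀* ρ' agreeing with σ on a prefix of length n, where agreement also requires equal length when shorter than n) holds if and only if both: every finite prefix of ρ is a prefix of some firing sequence ≡₀*-equivalent to σ, and every finite prefix of σ is a prefix of some firing sequence ≡₀*-equivalent to ρ. -/

import Mathlib

open Relation

/-- A place/transition net with place type `S` and transition type `T`. -/
structure Net (S T : Type) where
  /-- arc weight from place `s` to transition `t` -/
  pre : T → S → ℕ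
  /-- arc weight from transition `t` to place `s` -/
  post : T → S → ℕ
  /-- the initial marking -/
  M0 : S → ℕ
  pre_finite : ∀ t, {s | pre t s > 0}.Finite
  pre_nonempty : ∀ t, ∃ s, pre t s > 0
  post_finite : ∀ t, {s | post t s > 0}.Finite

namespace Net

variable {S T : Type} (N : Net S T)

/-- the singleton step `{t}` is enabled at marking `M` -/
def Enabled (t : T) (M : S → ℕ) : Prop := ∀ s, N.pre t s ≤ M s

/-- the two-element multiset step `{t,u}` is enabled at marking `M` -/
def Enabled2 (t u : T) (M : S → ℕ) : Prop := ∀ s, N.pre t s + N.pre u s ≤ M s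

/-- firing transition `t` leads from marking `M` to marking `M'` -/
def Fires (t : T) (M M' : S → ℕ) : Prop :=
  N.Enabled t M ∧ M' = fun s => M s - N.pre t s + N.post t s

/-- firing the finite transition sequence `σ` leads from `M` to `M'` -/
inductive FiresList : (S → ℕ) → List T → (S → ℕ) → Prop
  | nil (M : S → ℕ) : FiresList M [] M
  | cons {M M₁ M' : S → ℕ} {t : T} {σ : List T} :
      N.Fires t M M₁ → FiresList M₁ σ M' → FiresList M (t :: σ) M'

/-- a marking is reachable -/
def Reachable (M : S → ℕ) : Prop := ∃ σ : List T, N.FiresList N.M0 σ M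

/-- `σ` is a finite firing sequence of `N` -/
def FS (σ : List T) : Prop := ∃ M, N.FiresList N.M0 σ M

/-- `σ` is a (possibly infinite) firing sequence of `N` -/
def FSInf (σ : Stream'.Seq T) : Prop := ∀ n, N.FS (σ.take n)

/-- adjacency `≡₀` on finite firing sequences -/
def Adj (σ ρ : List T) : Prop :=
  ∃ (α β : List T) (t u : T) (M : S → ℕ),
    σ = α ++ t :: u :: β ∧ ρ = α ++ u :: t :: β ∧
    N.FiresList N.M0 α M ∧ N.Enabled2 t u M ∧ N.FS σ ∧ N.FS ρ

/-- adjacency `≡₀` on possibly infinite firing sequences -/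
def AdjSeq (σ ρ : Stream'.Seq T) : Prop :=
  ∃ (α : List T) (β : Stream'.Seq T) (t u : T) (M : S → ℕ),
    σ = (Stream'.Seq.ofList (α ++ [t, u])).append β ∧
    ρ = (Stream'.Seq.ofList (α ++ [u, t])).append β ∧
    N.FiresList N.M0 α M ∧ N.Enabled2 t u M ∧ N.FSInf σ ∧ N.FSInf ρ

end Net

/-- the finite sequence `l` is a prefix of the possibly infinite sequence `s` -/
def ListPrefixSeq {T : Type} (l : List T) (s : Stream'.Seq T) : Prop :=
  s.take l.length = l

namespace Net

variable {S T : Type} (N : Net S T)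

/-- the preorder `⊑₀^∞` on possibly infinite firing sequences -/
def Sqsubseteq0 (σ ρ : Stream'.Seq T) : Prop :=
  ∀ σ'' : List T, N.FS σ'' → ListPrefixSeq σ'' σ →
    ∃ σ' ρ' : List T, N.FS σ' ∧ N.FS ρ' ∧ σ'' <+: σ' ∧
      ReflTransGen N.Adj σ' ρ' ∧ ListPrefixSeq ρ' ρ

end Net

/-- the sequence `σ` has length at least `n` -/
def SeqLenGe {T : Type} (σ : Stream'.Seq T) (n : ℕ) : Prop :=
  ∀ i < n, (σ.get? i).isSome

/-- `σ ₙ= ρ`: the sequences are equal, or both have the same length (at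
least `n`) and agree on their prefixes of length `n` -/
def NEq {T : Type} (n : ℕ) (σ ρ : Stream'.Seq T) : Prop :=
  σ = ρ ∨ (SeqLenGe σ n ∧ (∀ i, (σ.get? i).isSome ↔ (ρ.get? i).isSome) ∧
    σ.take n = ρ.take n)


section Equiv0Aux

open Stream' Relation

private lemma isSome_getElem' {T : Type} (l : List T) (i : ℕ) :
    l[i]?.isSome ↔ i < l.length := by
  rcases Nat.lt_or_ge i l.length with h | h
  · simp [List.getElem?_eq_some_iff.mpr ⟨h, rfl⟩, h]
  · simp [List.getElem?_eq_none h, Nat.not_lt.mpr h]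

private lemma lt_length_take {T : Type} (s : Stream'.Seq T) (n i : ℕ) :
    i < (s.take n).length ↔ i < n ∧ (s.get? i).isSome := by
  rw [← isSome_getElem', Stream'.Seq.getElem?_take]
  split <;> simp_all

private lemma take_length_take {T : Type} (s : Stream'.Seq T) (n : ℕ) :
    s.take ((s.take n).length) = s.take n := by
  apply List.ext_getElem?
  intro i
  rw [Stream'.Seq.getElem?_take, Stream'.Seq.getElem?_take]
  rcases Nat.lt_or_ge i ((s.take n).length) with h | h
  · have h2 := (lt_length_take s n i).1 h
    simp [h, h2.1]
  · have hns : ¬ (i < n ∧ (s.get? i).isSome) := fun hc =>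
      Nat.not_lt.mpr h ((lt_length_take s n i).2 hc)
    rw [if_neg (Nat.not_lt.mpr h)]
    split
    · next hlt =>
      by_cases hs : (s.get? i).isSome
      · exact absurd ⟨hlt, hs⟩ hns
      · exact (Option.not_isSome_iff_eq_none.mp hs).symm
    · rfl

private lemma listPrefixSeq_take {T : Type} (s : Stream'.Seq T) (n : ℕ) :
    ListPrefixSeq (s.take n) s :=
  take_length_take s n

private lemma length_take_of_forall {T : Type} {s : Stream'.Seq T} {n : ℕ}
    (h : ∀ i < n, (s.get? i).isSome) : (s.take n).length = n := by
  have h1 : ∀ i, i < (s.take n).length ↔ i < n := fun i => by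
    rw [lt_length_take]
    exact ⟨fun hh => hh.1, fun hh => ⟨hh, h i hh⟩⟩
  rcases Nat.lt_trichotomy (s.take n).length n with hh | hh | hh
  · exact absurd ((h1 _).2 hh) (Nat.lt_irrefl _)
  · exact hh
  · exact absurd ((h1 _).1 hh) (Nat.lt_irrefl _)

private lemma get?_ofList_append {T : Type} (l : List T) (s : Stream'.Seq T) (i : ℕ) :
    ((Stream'.Seq.ofList l).append s).get? i =
      if i < l.length then l[i]? else s.get? (i - l.length) := by
  induction l generalizing i with
  | nil => simp [Stream'.Seq.ofList_nil, Stream'.Seq.nil_append]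
  | cons a l ih =>
    rw [Stream'.Seq.ofList_cons, Stream'.Seq.cons_append]
    cases i with
    | zero => simp [Stream'.Seq.get?_cons_zero]
    | succ i =>
      rw [Stream'.Seq.get?_cons_succ, ih]
      simp [Nat.succ_lt_succ_iff, Nat.succ_sub_succ]

private lemma isSome_ofList_append {T : Type} (l : List T) (s : Stream'.Seq T) (i : ℕ) :
    (((Stream'.Seq.ofList l).append s).get? i).isSome ↔
      (i < l.length ∨ (s.get? (i - l.length)).isSome) := by
  rw [get?_ofList_append]
  split
  · next h => simp [isSome_getElem', h]
  · next h => simp [h]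

private lemma adjSeq_symm {S T : Type} (N : Net S T) : Symmetric N.AdjSeq := by
  rintro σ ρ ⟨α, β, t, u, M, h1, h2, hα, he, hfs1, hfs2⟩
  exact ⟨α, β, u, t, M, h2, h1, hα, fun s => by rw [Nat.add_comm]; exact he s, hfs2, hfs1⟩

private lemma rtg_symm {S T : Type} (N : Net S T) {σ ρ : Stream'.Seq T}
    (h : ReflTransGen N.AdjSeq σ ρ) : ReflTransGen N.AdjSeq ρ σ :=
  by haveI : Std.Symm N.AdjSeq := ⟨adjSeq_symm N⟩; exact (ReflTransGen.symmetric).symm _ _ h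

private lemma adjSeq_isSome {S T : Type} {N : Net S T} {σ ρ : Stream'.Seq T}
    (h : N.AdjSeq σ ρ) (i : ℕ) : (σ.get? i).isSome ↔ (ρ.get? i).isSome := by
  obtain ⟨α, β, t, u, M, h1, h2, -⟩ := h
  subst h1; subst h2
  rw [isSome_ofList_append, isSome_ofList_append]
  simp

private lemma rtg_isSome {S T : Type} {N : Net S T} {σ ρ : Stream'.Seq T}
    (h : ReflTransGen N.AdjSeq σ ρ) (i : ℕ) : (σ.get? i).isSome ↔ (ρ.get? i).isSome := by
  induction h with
  | refl => rfl
  | tail _ h2 ih => exact ih.trans (adjSeq_isSome h2 i)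

private lemma fin_case {S T : Type} (N : Net S T) (σ ρ : Stream'.Seq T)
    (hσ : N.FSInf σ) (hρ : N.FSInf ρ)
    (c1 : ∀ ρ'' : List T, N.FS ρ'' → ListPrefixSeq ρ'' ρ →
        ∃ σ' : Stream'.Seq T, N.FSInf σ' ∧ ListPrefixSeq ρ'' σ' ∧
          Relation.ReflTransGen N.AdjSeq σ' σ)
    (c2 : ∀ σ'' : List T, N.FS σ'' → ListPrefixSeq σ'' σ →
        ∃ ρ' : Stream'.Seq T, N.FSInf ρ' ∧ ListPrefixSeq σ'' ρ' ∧
          Relation.ReflTransGen N.AdjSeq ρ' ρ)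
    (L : ℕ) (hL : ρ.get? L = none) (hLlt : ∀ i < L, (ρ.get? i).isSome) :
    ReflTransGen N.AdjSeq σ ρ := by
  -- step 1: σ terminates at some m ≤ L
  obtain ⟨ρ', hρ'inf, hpre, hrtg⟩ := c2 (σ.take (L+1)) (hσ (L+1)) (listPrefixSeq_take σ (L+1))
  set m := (σ.take (L+1)).length with hm
  have hmle : m ≤ L + 1 := by
    by_contra hc
    have := ((lt_length_take σ (L+1) (L+1)).1 (Nat.lt_of_not_le hc)).1
    exact Nat.lt_irrefl _ this
  have hmleL : m ≤ L := by
    rcases Nat.lt_or_ge m (L+1) with h | h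
    · omega
    · exfalso
      have hmeq : m = L + 1 := Nat.le_antisymm hmle h
      -- ρ'.take m = σ.take (L+1) has length L+1
      have hlen : (ρ'.take m).length = L + 1 := by
        rw [hpre, ← hm, hmeq]
      have : L < (ρ'.take m).length := by omega
      have h2 := ((lt_length_take ρ' m L).1 this).2
      have h3 := (rtg_isSome hrtg L).1 h2
      rw [hL] at h3
      simp at h3
  have hσnone : σ.get? m = none := by
    have h1 : ¬ (m < (σ.take (L+1)).length) := by omega
    rw [lt_length_take] at h1
    push_neg at h1
    exact Option.not_isSome_iff_eq_none.mp (fun hs => Nat.lt_irrefl m (by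
      exact absurd hs (h1 (by omega))))
  have hσsome : ∀ i < m, (σ.get? i).isSome := fun i hi =>
    ((lt_length_take σ (L+1) i).1 (by omega)).2
  -- step 3: σ' with σ'.take L = ρ.take L, RTG σ' σ
  have hlenρ : (ρ.take L).length = L := length_take_of_forall hLlt
  obtain ⟨σ', hσ'inf, hpre', hrtg'⟩ := c1 (ρ.take L) (hρ L) (listPrefixSeq_take ρ L)
  unfold ListPrefixSeq at hpre'
  rw [hlenρ] at hpre'
  -- σ'.take L = ρ.take L
  have hσ'some : ∀ i < L, (σ'.get? i).isSome := fun i hi =>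
    ((lt_length_take σ' L i).1 (by rw [hpre', hlenρ]; exact hi)).2
  have hdom := rtg_isSome hrtg'
  -- step 4: m = L
  have hmeqL : m = L := by
    rcases Nat.lt_or_ge m L with h | h
    · exfalso
      have := (hdom m).1 (hσ'some m h)
      rw [hσnone] at this
      simp at this
    · omega
  -- step 5: σ' = ρ
  have hσ'ρ : σ' = ρ := by
    apply Stream'.Seq.ext
    intro i
    rcases Nat.lt_or_ge i L with h | h
    · have e1 : (σ'.take L)[i]? = σ'.get? i := by
        rw [Stream'.Seq.getElem?_take]; simp [h]
      have e2 : (ρ.take L)[i]? = ρ.get? i := by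
        rw [Stream'.Seq.getElem?_take]; simp [h]
      rw [← e1, ← e2, hpre']
    · have e1 : ρ.get? i = none := ρ.le_stable h hL
      have e2 : σ.get? i = none := σ.le_stable (by omega) hσnone
      have e3 : σ'.get? i = none := by
        rw [← Option.not_isSome_iff_eq_none]
        intro hs
        have := (hdom i).1 hs
        rw [e2] at this
        simp at this
      rw [e1, e3]
  rw [hσ'ρ] at hrtg'
  exact rtg_symm N hrtg'

end Equiv0Aux

theorem equiv0inf_characterisation {S T : Type} (N : Net S T)
    (σ ρ : Stream'.Seq T) (hσ : N.FSInf σ) (hρ : N.FSInf ρ) :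
    (∀ n : ℕ, ∃ σ' ρ' : Stream'.Seq T, N.FSInf σ' ∧ N.FSInf ρ' ∧
      Relation.ReflTransGen N.AdjSeq σ σ' ∧ NEq n σ' ρ ∧
      NEq n σ ρ' ∧ Relation.ReflTransGen N.AdjSeq ρ' ρ) ↔
    ((∀ ρ'' : List T, N.FS ρ'' → ListPrefixSeq ρ'' ρ →
        ∃ σ' : Stream'.Seq T, N.FSInf σ' ∧ ListPrefixSeq ρ'' σ' ∧
          Relation.ReflTransGen N.AdjSeq σ' σ) ∧
     (∀ σ'' : List T, N.FS σ'' → ListPrefixSeq σ'' σ →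
        ∃ ρ' : Stream'.Seq T, N.FSInf ρ' ∧ ListPrefixSeq σ'' ρ' ∧
          Relation.ReflTransGen N.AdjSeq ρ' ρ)) := by
  constructor
  · intro h
    constructor
    · intro ρ'' hfs hpre
      obtain ⟨σ', ρ', hσ', hρ', h1, h2, h3, h4⟩ := h ρ''.length
      refine ⟨σ', hσ', ?_, rtg_symm N h1⟩
      unfold ListPrefixSeq at *
      rcases h2 with h2 | ⟨-, -, h2⟩
      · rw [h2, hpre]
      · rw [h2, hpre]
    · intro σ'' hfs hpre
      obtain ⟨σ', ρ', hσ', hρ', h1, h2, h3, h4⟩ := h σ''.length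
      refine ⟨ρ', hρ', ?_, h4⟩
      unfold ListPrefixSeq at *
      rcases h3 with h3 | ⟨-, -, h3⟩
      · rw [← h3, hpre]
      · rw [← h3, hpre]
  · rintro ⟨c1, c2⟩ n
    classical
    by_cases hB : ∀ i, (ρ.get? i).isSome
    · by_cases hA : ∀ i, (σ.get? i).isSome
      · -- both infinite
        have hρlen : (ρ.take n).length = n := length_take_of_forall (fun i _ => hB i)
        have hσlen : (σ.take n).length = n := length_take_of_forall (fun i _ => hA i)
        obtain ⟨σ', hσ'1, hpre1, hrtg1⟩ := c1 (ρ.take n) (hρ n) (listPrefixSeq_take ρ n)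
        obtain ⟨ρ', hρ'1, hpre2, hrtg2⟩ := c2 (σ.take n) (hσ n) (listPrefixSeq_take σ n)
        unfold ListPrefixSeq at hpre1 hpre2
        rw [hρlen] at hpre1
        rw [hσlen] at hpre2
        have hσ'some : ∀ i, (σ'.get? i).isSome := fun i =>
          (rtg_isSome hrtg1 i).2 (hA i)
        have hρ'some : ∀ i, (ρ'.get? i).isSome := fun i =>
          (rtg_isSome hrtg2 i).2 (hB i)
        refine ⟨σ', ρ', hσ'1, hρ'1, rtg_symm N hrtg1, ?_, ?_, hrtg2⟩
        · exact Or.inr ⟨fun i _ => hσ'some i, fun i => by simp [hσ'some i, hB i], hpre1⟩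
        · exact Or.inr ⟨fun i _ => hA i, fun i => by simp [hA i, hρ'some i], hpre2.symm⟩
      · -- σ finite
        push_neg at hA
        have hex : ∃ i, σ.get? i = none := by
          obtain ⟨i, hi⟩ := hA
          exact ⟨i, Option.not_isSome_iff_eq_none.mp hi⟩
        set L := Nat.find hex with hLdef
        have hL : σ.get? L = none := Nat.find_spec hex
        have hLlt : ∀ i < L, (σ.get? i).isSome := fun i hi => by
          have := Nat.find_min hex hi
          exact Option.ne_none_iff_isSome.mp this
        have hmain := fin_case N ρ σ hρ hσ c2 c1 L hL hLlt
        have hmain' := rtg_symm N hmain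
        exact ⟨ρ, σ, hρ, hσ, hmain', Or.inl rfl, Or.inl rfl, hmain'⟩
    · -- ρ finite
      push_neg at hB
      have hex : ∃ i, ρ.get? i = none := by
        obtain ⟨i, hi⟩ := hB
        exact ⟨i, Option.not_isSome_iff_eq_none.mp hi⟩
      set L := Nat.find hex with hLdef
      have hL : ρ.get? L = none := Nat.find_spec hex
      have hLlt : ∀ i < L, (ρ.get? i).isSome := fun i hi => by
        have := Nat.find_min hex hi
        exact Option.ne_none_iff_isSome.mp this
      have hmain := fin_case N σ ρ hσ hρ c1 c2 L hL hLlt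
      exact ⟨ρ, σ, hρ, hσ, hmain, Or.inl rfl, Or.inl rfl, hmain⟩
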